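/- Let d ≥ 3, μ > 0, f(r) = r² + 1 − μ r^{2−d}, and r₊ its unique positive root. The improper integral z(r) = ∫_r^∞ dt/f(t) converges for every r > r₊, and z is a strictly decreasing analytic bijection from (r₊, ∞) onto (0, ∞) with z(r) → 0 as r → ∞ and z(r) → ∞ as r → r₊⁺. -/

import Mathlib

open Real MeasureTheory Set Filter
open scoped ENNReal NNReal Topology

set_option maxHeartbeats 1000000 in
lemma analyticAt_of_hasDerivAt {g F : ℝ → ℝ} {x₀ : ℝ}
    (hg : AnalyticAt ℝ g x₀) (hF : ∀ᶠ x in nhds x₀, HasDerivAt F (g x) x) :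
    AnalyticAt ℝ F x₀ := by
  obtain ⟨p, r, hpr⟩ := hg
  obtain ⟨ε, hε, hεF⟩ := Metric.eventually_nhds_iff.mp hF
  obtain ⟨ρ, hρ1, hρ2⟩ := ENNReal.lt_iff_exists_nnreal_btwn.mp
    (show (0:ℝ≥0∞) < min r (ENNReal.ofReal ε) from
      lt_min hpr.r_pos (ENNReal.ofReal_pos.mpr hε))
  rw [lt_min_iff] at hρ2
  have hρ0 : 0 < ρ := by exact_mod_cast hρ1
  have hρ0' : (0:ℝ) < (ρ:ℝ) := by exact_mod_cast hρ0
  have hρr : (ρ : ℝ≥0∞) < r := hρ2.1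
  have hρε : (ρ : ℝ) < ε := by
    have := hρ2.2
    rwa [ENNReal.lt_ofReal_iff_toReal_lt (by simp)] at this
  set a : ℕ → ℝ := fun n => p.coeff n with ha
  have S : Summable fun n => |a n| * (ρ:ℝ)^n := by
    have := p.summable_norm_mul_pow (lt_of_lt_of_le hρr hpr.r_le)
    simpa [FormalMultilinearSeries.norm_apply_eq_norm_coef, Real.norm_eq_abs] using this
  set c : ℕ → ℝ := fun n => match n with | 0 => 0 | m+1 => a m / (m+1) with hc
  set u : ℕ → ℝ := fun n => match n with | 0 => 0 | m+1 => |a m| * (ρ:ℝ)^m with hu'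
  have hu : Summable u := by
    rw [← summable_nat_add_iff 1]; exact S
  set fn : ℕ → ℝ → ℝ := fun n x => c n * (x - x₀)^n with hfn
  set fn' : ℕ → ℝ → ℝ := fun n x => match n with | 0 => 0 | m+1 => a m * (x - x₀)^m with hfn'
  have hderiv : ∀ n y, y ∈ Metric.ball x₀ (ρ:ℝ) → HasDerivAt (fn n) (fn' n y) y := by
    intro n y _
    have h0 : HasDerivAt (fun x : ℝ => c n * (x - x₀)^n)
        (c n * (n * (y - x₀)^(n-1) * 1)) y :=
      (((hasDerivAt_id y).sub_const x₀).pow n).const_mul (c n)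
    cases n with
    | zero =>
      have e1 : fn 0 = fun _ : ℝ => (0:ℝ) := by funext x; simp [hfn, hc]
      rw [e1]
      exact hasDerivAt_const y (0:ℝ)
    | succ m =>
      convert h0 using 1
      simp only [hc, hfn']
      field_simp
      simp only [Nat.add_sub_cancel]; push_cast; ring
  have hbound : ∀ n y, y ∈ Metric.ball x₀ (ρ:ℝ) → ‖fn' n y‖ ≤ u n := by
    intro n y hy
    cases n with
    | zero => simp [hfn', hu']
    | succ m =>
      simp only [hfn', hu', Real.norm_eq_abs, abs_mul, abs_pow]
      have h1 : |y - x₀| ≤ (ρ:ℝ) := by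
        rw [Metric.mem_ball, Real.dist_eq] at hy; exact hy.le
      exact mul_le_mul_of_nonneg_left (pow_le_pow_left₀ (abs_nonneg _) h1 m) (abs_nonneg _)
  have hsum0 : Summable fun n => fn n x₀ := by
    have : (fun n => fn n x₀) = fun _ => (0:ℝ) := by
      funext n; cases n <;> simp [hfn, hc]
    rw [this]; exact summable_zero
  set h : ℝ → ℝ := fun x => ∑' n, fn n x with hh
  have hSummf : ∀ y ∈ Metric.ball x₀ (ρ:ℝ), Summable fun n => fn n y := by
    intro y hy
    apply Summable.of_norm_bounded (hu.mul_left (ρ:ℝ))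
    intro n
    cases n with
    | zero => simp [hfn, hc, hu']
    | succ m =>
      simp only [hfn, hc, hu', Real.norm_eq_abs, abs_mul, abs_pow]
      have h1 : |y - x₀| ≤ (ρ:ℝ) := by
        rw [Metric.mem_ball, Real.dist_eq] at hy; exact hy.le
      have h2 : |a m / ((m:ℝ)+1)| ≤ |a m| := by
        rw [abs_div, abs_of_nonneg (by positivity : (0:ℝ) ≤ (m:ℝ)+1)]
        exact div_le_self (abs_nonneg _) (by simp)
      calc |a m / ((m:ℝ)+1)| * |y - x₀|^(m+1)
          ≤ |a m| * ((ρ:ℝ)^m * (ρ:ℝ)) := by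
            rw [pow_succ]
            exact mul_le_mul h2
              (mul_le_mul (pow_le_pow_left₀ (abs_nonneg _) h1 m) h1 (abs_nonneg _) (by positivity))
              (by positivity) (abs_nonneg _)
        _ = (ρ:ℝ) * (|a m| * (ρ:ℝ)^m) := by ring
  have hhd : ∀ y ∈ Metric.ball x₀ (ρ:ℝ), HasDerivAt h (g y) y := by
    intro y hy
    have H := hasDerivAt_tsum_of_isPreconnected hu Metric.isOpen_ball
      (convex_ball x₀ (ρ:ℝ)).isPreconnected hderiv hbound
      (Metric.mem_ball_self hρ0') hsum0 hy
    have hgy : HasSum (fun m => a m * (y - x₀)^m) (g y) := by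
      have hm : y - x₀ ∈ Metric.eball (0:ℝ) r := by
        rw [Metric.mem_eball, edist_zero_right]
        refine lt_of_lt_of_le ?_ hρr.le
        rw [Metric.mem_ball, Real.dist_eq] at hy
        simpa [← ofReal_norm, Real.norm_eq_abs] using
          (ENNReal.ofReal_lt_ofReal_iff hρ0').mpr hy
      have := hpr.hasSum hm
      simp only [FormalMultilinearSeries.apply_eq_pow_smul_coeff, smul_eq_mul,
        add_sub_cancel] at this
      convert this using 2 with m
      · rfl
      ring
    have hsum' : HasSum (fun n => fn' n y) (g y) := by
      have h1 : HasSum (fun m => fn' (m + 1) y) (g y - ∑ i ∈ Finset.range 1, fn' i y) := by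
        simpa [hfn'] using hgy
      exact (hasSum_nat_add_iff' 1).mp h1
    rw [hsum'.tsum_eq] at H
    exact H
  have hconst : ∀ y ∈ Metric.ball x₀ (ρ:ℝ), F y - h y = F x₀ - h x₀ := by
    intro y hy
    have hball : Metric.ball x₀ (ρ:ℝ) ⊆ Metric.ball x₀ ε :=
      Metric.ball_subset_ball hρε.le
    have hd : ∀ x ∈ Metric.ball x₀ (ρ:ℝ),
        HasDerivAt (fun t => F t - h t) 0 x := by
      intro x hx
      have := (hεF (by rw [← Metric.mem_ball]; exact hball hx)).sub (hhd x hx)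
      rw [sub_self] at this; exact this
    apply Convex.is_const_of_fderivWithin_eq_zero (convex_ball x₀ (ρ:ℝ))
      (fun x hx => (hd x hx).differentiableAt.differentiableWithinAt)
      (fun x hx => ?_) hy (Metric.mem_ball_self hρ0')
    rw [fderivWithin_of_isOpen Metric.isOpen_ball hx, (hd x hx).hasFDerivAt.fderiv]
    ext t
    simp
  have qcoeff : ∀ n, (FormalMultilinearSeries.ofScalars ℝ c).coeff n = c n := by
    intro n
    simp [FormalMultilinearSeries.coeff, FormalMultilinearSeries.ofScalars, List.prod_ofFn]
  have hHanal : AnalyticAt ℝ h x₀ := by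
    refine ⟨FormalMultilinearSeries.ofScalars ℝ c, hasFPowerSeriesAt_iff'.mpr ?_⟩
    filter_upwards [Metric.ball_mem_nhds x₀ hρ0'] with y hy
    have hs := (hSummf y hy).hasSum
    simp only [qcoeff, smul_eq_mul]
    convert hs using 2 with n
    · rfl
    exact mul_comm _ _
  have hFeq : (fun y => h y + (F x₀ - h x₀)) =ᶠ[𝓝 x₀] F := by
    filter_upwards [Metric.ball_mem_nhds x₀ hρ0'] with y hy
    have := hconst y hy; linarith
  exact ((hHanal.add analyticAt_const)).congr hFeq
set_option maxHeartbeats 1000000 in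
/-- With `f(r) = r² + 1 − μ r^{2−d}` and `r₊` its unique positive root, the
Regge–Wheeler coordinate `z(r) = ∫_r^∞ dt/f(t)` is defined (the integral converges)
for every `r > r₊`, and `z` is a strictly decreasing analytic bijection from
`(r₊,∞)` onto `(0,∞)`, with `z(r) → 0` as `r → ∞` and `z(r) → ∞` as `r → r₊⁺`. -/
theorem stmt_2 (d : ℕ) (hd : 3 ≤ d) (μ : ℝ) (hμ : 0 < μ) (rp : ℝ) (hrp : 0 < rp)
    (hroot : rp ^ 2 + 1 - μ / rp ^ (d - 2) = 0)
    (huniq : ∀ r : ℝ, 0 < r → r ^ 2 + 1 - μ / r ^ (d - 2) = 0 → r = rp)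
    (z : ℝ → ℝ)
    (hz : ∀ r : ℝ, z r = ∫ t in Ioi r, (t ^ 2 + 1 - μ / t ^ (d - 2))⁻¹) :
    (∀ r : ℝ, rp < r →
      IntegrableOn (fun t : ℝ => (t ^ 2 + 1 - μ / t ^ (d - 2))⁻¹) (Ioi r)) ∧
    StrictAntiOn z (Ioi rp) ∧
    AnalyticOnNhd ℝ z (Ioi rp) ∧
    InjOn z (Ioi rp) ∧ z '' (Ioi rp) = Ioi 0 ∧
    Tendsto z atTop (nhds 0) ∧
    Tendsto z (nhdsWithin rp (Ioi rp)) atTop := by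
  set k := d - 2 with hkdef
  have hk1 : 1 ≤ k := by omega
  set fl : ℝ → ℝ := fun t => t ^ 2 + 1 - μ / t ^ k with hfl
  set g : ℝ → ℝ := fun t => (fl t)⁻¹ with hgd
  -- positivity of fl on (rp, ∞)
  have hflrp : fl rp = 0 := hroot
  have hfpos : ∀ t, rp < t → 0 < fl t := by
    intro t ht
    have htpos : 0 < t := hrp.trans ht
    have h1 : rp ^ 2 < t ^ 2 := by nlinarith
    have h2 : μ / t ^ k < μ / rp ^ k :=
      div_lt_div_of_pos_left hμ (pow_pos hrp k) (pow_lt_pow_left₀ ht hrp.le (by omega))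
    have := hflrp
    simp only [hfl] at this ⊢
    nlinarith
  have hgpos : ∀ t, rp < t → 0 < g t := fun t ht => inv_pos.mpr (hfpos t ht)
  -- continuity
  have hflcont : ContinuousOn fl (Ioi rp) := by
    apply ContinuousOn.sub
    · exact (continuous_pow 2).continuousOn.add continuousOn_const
    · exact continuousOn_const.div (continuous_pow k).continuousOn
        (fun t ht => pow_ne_zero k (hrp.trans ht).ne')
  have hgcont : ContinuousOn g (Ioi rp) :=
    hflcont.inv₀ fun t ht => (hfpos t ht).ne'
  -- integrability
  have hInt : ∀ r, rp < r → IntegrableOn g (Ioi r) := by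
    intro r hr
    set T : ℝ := max (max r 1) μ with hT
    have hrT : r ≤ T := le_max_of_le_left (le_max_left _ _)
    have hT1 : (1:ℝ) ≤ T := le_max_of_le_left (le_max_right _ _)
    have hTpos : (0:ℝ) < T := lt_of_lt_of_le one_pos hT1
    have hsub : Ioi r ⊆ Ioi rp := Ioi_subset_Ioi hr.le
    have hgcr : ContinuousOn g (Ioi r) := hgcont.mono hsub
    have h1 : IntegrableOn g (Ioc r T) := by
      have : ContinuousOn g (Icc r T) := by
        rcases le_or_gt r T with _ | hTr
        · exact hgcont.mono (fun x hx => lt_of_lt_of_le hr hx.1)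
        · simp [Icc_eq_empty_of_lt hTr, continuousOn_empty]
      exact (this.integrableOn_Icc).mono_set Ioc_subset_Icc_self
    have h2 : IntegrableOn g (Ioi T) := by
      have hbound : ∀ t ∈ Ioi T, ‖g t‖ ≤ t ^ (-2 : ℝ) := by
        intro t ht
        have ht1 : (1:ℝ) < t := lt_of_le_of_lt hT1 ht
        have htpos : (0:ℝ) < t := one_pos.trans ht1
        have htk : t ≤ t ^ k := by
          calc t = t ^ 1 := (pow_one t).symm
          _ ≤ t ^ k := pow_le_pow_right₀ ht1.le hk1
        have hμt : μ / t ^ k ≤ 1 := by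
          rw [div_le_one (lt_of_lt_of_le htpos htk)]
          calc μ ≤ T := le_max_right _ _
          _ ≤ t := (le_of_lt ht)
          _ ≤ t ^ k := htk
        have hfl2 : t ^ 2 ≤ fl t := by simp only [hfl]; nlinarith
        have hflpos : (0:ℝ) < fl t := lt_of_lt_of_le (by positivity) hfl2
        rw [Real.norm_eq_abs, abs_of_nonneg (inv_nonneg.mpr hflpos.le),
          Real.rpow_neg htpos.le, show ((2:ℝ) = ((2:ℕ):ℝ)) by norm_num, Real.rpow_natCast]
        exact inv_anti₀ (by positivity) hfl2
      have hmint : IntegrableOn (fun t : ℝ => t ^ (-2:ℝ)) (Ioi T) :=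
        integrableOn_Ioi_rpow_of_lt (by norm_num) hTpos
      apply Integrable.mono' hmint
      · exact ((hgcont.mono (Ioi_subset_Ioi (hr.le.trans hrT))).aestronglyMeasurable
          measurableSet_Ioi)
      · exact (ae_restrict_iff' measurableSet_Ioi).mpr (ae_of_all _ hbound)
    have := h1.union h2
    rwa [Ioc_union_Ioi_eq_Ioi hrT] at this
  -- interval integrability
  have hII : ∀ a b, rp < a → a ≤ b → IntervalIntegrable g volume a b := by
    intro a b ha hab
    exact (intervalIntegrable_iff_integrableOn_Ioc_of_le hab).mpr
        ((hInt a ha).mono_set Ioc_subset_Ioi_self)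
  -- splitting
  have hsplit : ∀ a b, rp < a → a ≤ b → z a = (∫ t in a..b, g t) + z b := by
    intro a b ha hab
    have h1 : IntegrableOn g (Ioc a b) := (hInt a ha).mono_set Ioc_subset_Ioi_self
    have h2 : IntegrableOn g (Ioi b) := hInt b (lt_of_lt_of_le ha hab)
    have hu : Ioc a b ∪ Ioi b = Ioi a := Ioc_union_Ioi_eq_Ioi hab
    have hd : Disjoint (Ioc a b) (Ioi b) := Ioc_disjoint_Ioi le_rfl
    rw [hz a, hz b, ← hu, setIntegral_union hd measurableSet_Ioi h1 h2,
      intervalIntegral.integral_of_le hab]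
  have hzero_le : ∀ b, rp < b → 0 ≤ z b := by
    intro b hb
    rw [hz b]
    exact setIntegral_nonneg measurableSet_Ioi fun t ht => (hgpos t (hb.trans ht)).le
  have hintpos : ∀ a b, rp < a → a < b → 0 < ∫ t in a..b, g t := by
    intro a b ha hab
    apply intervalIntegral.intervalIntegral_pos_of_pos_on (hII a b ha hab.le)
      (fun t ht => hgpos t (ha.trans ht.1)) hab
  have hzpos : ∀ r, rp < r → 0 < z r := by
    intro r hr
    have := hsplit r (r+1) hr (by linarith)
    have h1 := hintpos r (r+1) hr (by linarith)
    have h2 := hzero_le (r+1) (by linarith)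
    linarith
  -- strict anti
  have hanti : StrictAntiOn z (Ioi rp) := by
    intro a ha b hb hab
    have := hsplit a b ha hab.le
    have h1 := hintpos a b ha hab
    linarith
  -- derivative
  have hder : ∀ r, rp < r → HasDerivAt z (-(g r)) r := by
    intro r hr
    have hb : r < r + 1 := by linarith
    have H : HasDerivAt (fun u => ∫ t in u..(r+1), g t) (-(g r)) r := by
      apply intervalIntegral.integral_hasDerivAt_left (hII r (r+1) hr (by linarith))
      · exact ContinuousOn.stronglyMeasurableAtFilter isOpen_Ioi hgcont r hr
      · exact hgcont.continuousAt (Ioi_mem_nhds hr)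
    have heq : z =ᶠ[𝓝 r] fun u => (∫ t in u..(r+1), g t) + z (r+1) := by
      filter_upwards [Ioo_mem_nhds hr hb] with u hu
      exact hsplit u (r+1) hu.1 hu.2.le
    exact (H.add_const (z (r+1))).congr_of_eventuallyEq heq
  have hzcont : ContinuousOn z (Ioi rp) :=
    fun x hx => ((hder x hx).continuousAt).continuousWithinAt
  -- analyticity
  have hanal : AnalyticOnNhd ℝ z (Ioi rp) := by
    intro x hx
    have hxpos : 0 < x := hrp.trans hx
    have hfa : AnalyticAt ℝ fl x := by
      apply AnalyticAt.sub
      · exact ((analyticAt_id.pow 2).add analyticAt_const)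
      · exact analyticAt_const.div (analyticAt_id.pow k) (pow_ne_zero k hxpos.ne')
    have hga : AnalyticAt ℝ (fun t => -(g t)) x := (hfa.inv (hfpos x hx).ne').neg
    apply analyticAt_of_hasDerivAt hga
    filter_upwards [Ioi_mem_nhds hx] with t ht
    exact hder t ht
  -- tendsto at top
  have htop : Tendsto z atTop (𝓝 0) := by
    set a := rp + 1 with hadef
    have ha : rp < a := by rw [hadef]; linarith
    have T : Tendsto (fun b => ∫ t in a..b, g t) atTop (𝓝 (z a)) := by
      rw [hz a]
      exact intervalIntegral_tendsto_integral_Ioi a (hInt a ha) tendsto_id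
    have T2 : Tendsto (fun b => z a - ∫ t in a..b, g t) atTop (𝓝 (z a - z a)) :=
      tendsto_const_nhds.sub T
    rw [sub_self] at T2
    apply T2.congr'
    filter_upwards [eventually_ge_atTop a] with b hb
    have := hsplit a b ha hb
    linarith
  -- tendsto at rp from the right
  have hbot : Tendsto z (𝓝[>] rp) atTop := by
    set b := rp + 1 with hbdef
    have hb : rp < b := by rw [hbdef]; linarith
    set L : ℝ := 2 * b + μ * k / rp ^ (k + 1) with hL
    have hLpos : 0 < L := by
      have : (0:ℝ) < μ * k / rp ^ (k+1) := by
        apply div_pos (mul_pos hμ (by exact_mod_cast (by omega : 0 < k))) (pow_pos hrp _)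
      simp only [hL]; nlinarith
    -- derivative bound on Icc rp b
    have hfd : ∀ t ∈ Icc rp b, HasDerivWithinAt fl (2*t + μ*k/t^(k+1)) (Icc rp b) t := by
      intro t ht
      have htpos : 0 < t := lt_of_lt_of_le hrp ht.1
      have h1 : HasDerivAt (fun s : ℝ => s ^ 2 + 1) (2*t) t := by
        simpa using ((hasDerivAt_pow 2 t).add_const 1)
      have h2 : HasDerivAt (fun s : ℝ => μ / s ^ k) (-(μ*k/t^(k+1))) t := by
        have := (hasDerivAt_const t μ).div (hasDerivAt_pow k t) (pow_ne_zero k htpos.ne')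
        convert this using 1
        · rfl
        · rfl
        · rfl
        rw [zero_mul, zero_sub, neg_div, neg_inj, ← pow_mul]
        rw [div_eq_div_iff (by positivity) (by positivity)]
        have he : k + 1 + (k - 1) = k * 2 := by omega
        calc μ * ↑k * t ^ (k * 2) = μ * (↑k * (t ^ (k+1) * t ^ (k-1))) := by
              rw [← pow_add, he]; ring
          _ = μ * (↑k * t ^ (k - 1)) * t ^ (k + 1) := by ring
      exact ((h1.sub h2).congr_deriv (by ring)).hasDerivWithinAt
    have hfbound : ∀ t ∈ Icc rp b, ‖2*t + μ*k/t^(k+1)‖ ≤ L := by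
      intro t ht
      obtain ⟨ht1, ht2⟩ := ht
      have htpos : 0 < t := lt_of_lt_of_le hrp ht1
      have h1 : μ*k/t^(k+1) ≤ μ*k/rp^(k+1) := by
        apply div_le_div_of_nonneg_left (by positivity) (pow_pos hrp _)
        exact pow_le_pow_left₀ hrp.le ht1 _
      rw [Real.norm_eq_abs, abs_of_nonneg (by positivity)]
      simp only [hL]; nlinarith
    have hlin : ∀ t ∈ Icc rp b, fl t ≤ L * (t - rp) := by
      intro t ht
      have := (convex_Icc rp b).norm_image_sub_le_of_norm_hasDerivWithin_le hfd hfbound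
        (left_mem_Icc.mpr hb.le) ht
      rw [hflrp, sub_zero, Real.norm_eq_abs, Real.norm_eq_abs,
        abs_of_nonneg (sub_nonneg.mpr ht.1)] at this
      exact (le_abs_self _).trans this
    -- lower bound for z r
    have hlb : ∀ r, rp < r → r < b → L⁻¹ * (Real.log (b - rp) - Real.log (r - rp)) ≤ z r := by
      intro r hr hrb
      have hcomp : ∀ t ∈ Icc r b, (L * (t - rp))⁻¹ ≤ g t := by
        intro t ht
        have htrp : rp < t := lt_of_lt_of_le hr ht.1
        have h1 : fl t ≤ L * (t - rp) := hlin t ⟨htrp.le, ht.2⟩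
        exact inv_anti₀ (hfpos t htrp) h1
      have hI1 : IntervalIntegrable (fun t => (L * (t - rp))⁻¹) volume r b := by
        apply ContinuousOn.intervalIntegrable
        apply ContinuousOn.inv₀
        · exact (continuousOn_const.mul (continuousOn_id.sub continuousOn_const))
        · intro t ht
          rw [uIcc_of_le hrb.le] at ht
          have hrt : rp < t := lt_of_lt_of_le hr ht.1
          exact (mul_pos hLpos (by linarith)).ne'
      have hmono := intervalIntegral.integral_mono_on hrb.le hI1 (hII r b hr hrb.le) hcomp
      have hcalc : (∫ t in r..b, (L * (t - rp))⁻¹)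
          = L⁻¹ * (Real.log (b - rp) - Real.log (r - rp)) := by
        have : ∀ t : ℝ, (L * (t - rp))⁻¹ = L⁻¹ * (t - rp)⁻¹ := by
          intro t; rw [mul_inv]
        simp_rw [this]
        rw [intervalIntegral.integral_const_mul]
        have h2 : (∫ t in r..b, (t - rp)⁻¹) = ∫ t in (r - rp)..(b - rp), t⁻¹ := by
          exact intervalIntegral.integral_comp_sub_right (fun t => t⁻¹) rp
        rw [h2, integral_inv_of_pos (by linarith) (by linarith),
          Real.log_div (by linarith) (by linarith)]
      have hzr : (∫ t in r..b, g t) ≤ z r := by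
        have := hsplit r b hr hrb.le
        have h2 := hzero_le b hb
        linarith
      calc L⁻¹ * (Real.log (b - rp) - Real.log (r - rp)) = ∫ t in r..b, (L * (t - rp))⁻¹ :=
            hcalc.symm
        _ ≤ ∫ t in r..b, g t := hmono
        _ ≤ z r := hzr
    have hΦ : Tendsto (fun r => L⁻¹ * (Real.log (b - rp) - Real.log (r - rp)))
        (𝓝[>] rp) atTop := by
      apply Tendsto.const_mul_atTop (inv_pos.mpr hLpos)
      apply tendsto_atTop_add_const_left
      have h1 : Tendsto (fun r : ℝ => r - rp) (𝓝[>] rp) (𝓝[>] 0) := by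
        apply tendsto_nhdsWithin_of_tendsto_nhds_of_eventually_within
        · simpa using (tendsto_id (x := 𝓝 rp)).sub_const rp |>.mono_left nhdsWithin_le_nhds
        · filter_upwards [self_mem_nhdsWithin] with r hr
          simp only [mem_Ioi] at hr ⊢; linarith
      have h2 : Tendsto (fun r : ℝ => Real.log (r - rp)) (𝓝[>] rp) atBot :=
        Real.tendsto_log_nhdsGT_zero.comp h1
      exact tendsto_neg_atBot_atTop.comp h2
    apply tendsto_atTop_mono' _ _ hΦ
    filter_upwards [Ioo_mem_nhdsGT_of_mem (left_mem_Ico.mpr hb)] with r hr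
    exact hlb r hr.1 hr.2
  -- image
  have himg : z '' (Ioi rp) = Ioi 0 := by
    apply Subset.antisymm
    · rintro y ⟨x, hx, rfl⟩
      exact hzpos x hx
    · intro y hy
      simp only [mem_Ioi] at hy
      obtain ⟨b, hb1, hb2⟩ : ∃ b, rp < b ∧ z b < y := by
        have h1 : ∀ᶠ x in atTop, z x < y := htop.eventually_lt_const hy
        have h2 : ∀ᶠ x in atTop, rp < x := eventually_gt_atTop rp
        exact ((h1.and h2).exists).imp fun x hx => ⟨hx.2, hx.1⟩
      obtain ⟨a, ha1, ha2⟩ : ∃ a, rp < a ∧ y < z a := by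
        have h1 : ∀ᶠ x in 𝓝[>] rp, y < z x := hbot.eventually_gt_atTop y
        exact ((h1.and self_mem_nhdsWithin).exists).imp fun x hx => ⟨hx.2, hx.1⟩
      have hab : a < b := by
        by_contra hab
        push_neg at hab
        rcases eq_or_lt_of_le hab with h | h
        · rw [h] at hb2; linarith
        · have := hanti hb1 (mem_Ioi.mpr ha1) h; linarith
      have := intermediate_value_Icc' hab.le (hzcont.mono (fun x hx => lt_of_lt_of_le ha1 hx.1))
      obtain ⟨x, hx1, hx2⟩ := this ⟨hb2.le, ha2.le⟩
      exact ⟨x, lt_of_lt_of_le ha1 hx1.1, hx2⟩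
  exact ⟨hInt, hanti, hanal, hanti.injOn, himg, htop, hbot⟩
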